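/- Let (p_n)_{n≥1} ⊆ [1,∞) and (σ_n)_{n≥1} ⊆ ℝ. For each W ∈ {E_BE, E_MB, E_FD}, the value function H_W : ℝ² → [−∞,+∞] is convex, in the sense that for all (u,v), (u',v') ∈ ℝ², all λ ∈ (0,1), and all reals μ > H_W(u,v) and μ' > H_W(u',v'), one has H_W(λ(u,v)+(1−λ)(u',v')) ≤ λμ + (1−λ)μ'. Moreover H_BE(u,v) ≤ H_MB(u,v) ≤ H_FD(u,v) for all (u,v) ∈ ℝ², and dom H_FD ⊆ dom H_MB = dom H_BE = dom S. -/

import Mathlib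

open Filter

/-- The Bose–Einstein entropy, with values in `ℝ ∪ {+∞}`. -/
noncomputable def EBEe (u : ℝ) : EReal :=
  if 0 ≤ u then ((u * Real.log u - (1 + u) * Real.log (1 + u) : ℝ) : EReal) else ⊤

/-- The Maxwell–Boltzmann entropy, with values in `ℝ ∪ {+∞}`. -/
noncomputable def EMBe (u : ℝ) : EReal :=
  if 0 ≤ u then ((u * (Real.log u - 1) : ℝ) : EReal) else ⊤

/-- The Fermi–Dirac entropy, with values in `ℝ ∪ {+∞}`. -/
noncomputable def EFDe (u : ℝ) : EReal :=
  if 0 ≤ u ∧ u ≤ 1 then ((u * Real.log u + (1 - u) * Real.log (1 - u) : ℝ) : EReal) else ⊤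

/-- The sum of a series in `ℝ ∪ {±∞}`, following the paper's convention: the limit of the
partial sums when this limit exists in `[−∞,+∞]`, and `+∞` otherwise. -/
noncomputable def serSum (β : ℕ → EReal) : EReal :=
  @dite _ (∃ l : EReal, Tendsto (fun N => ∑ k ∈ Finset.range N, β k) atTop (nhds l))
    (Classical.dec _) (fun h => h.choose) (fun _ => ⊤)

/-- `S(u,v)`: the set of sequences of nonnegative reals with `Σ u_n = u` and `Σ σ_n u_n = v`
(sums as limits of partial sums). -/
def Sfeas (σ : ℕ → ℝ) (u v : ℝ) : Set (ℕ → ℝ) :=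
  {w | (∀ n, 0 ≤ w n) ∧
    Tendsto (fun N => ∑ k ∈ Finset.range N, w k) atTop (nhds u) ∧
    Tendsto (fun N => ∑ k ∈ Finset.range N, σ k * w k) atTop (nhds v)}

/-- The value (marginal) function `H_W(u,v) = inf { Σ p_n W(u_n/p_n) : (u_n) ∈ S(u,v) }`,
with `inf ∅ = +∞`. -/
noncomputable def Hval (p σ : ℕ → ℝ) (W : ℝ → EReal) (u v : ℝ) : EReal :=
  sInf ((fun w => serSum fun n => (p n : EReal) * W (w n / p n)) '' Sfeas σ u v)

/-! ### Convexity of the three entropy functions -/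

lemma convexOn_fMB : ConvexOn ℝ (Set.Ici 0) (fun x : ℝ => x * (Real.log x - 1)) := by
  have h : (fun x : ℝ => x * (Real.log x - 1)) = fun x : ℝ => x * Real.log x - x := by
    funext x; ring
  rw [h]
  exact Real.convexOn_mul_log.sub (concaveOn_id (convex_Ici 0))

lemma convexOn_fFD : ConvexOn ℝ (Set.Icc 0 1)
    (fun x : ℝ => x * Real.log x + (1 - x) * Real.log (1 - x)) := by
  have h1 : ConvexOn ℝ (Set.Icc 0 1) (fun x : ℝ => x * Real.log x) :=
    Real.convexOn_mul_log.subset (fun x hx => hx.1) (convex_Icc 0 1)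
  have A : ConvexOn ℝ (Set.Iic 1) (fun x : ℝ => (1 - x) * Real.log (1 - x)) := by
    refine ⟨convex_Iic 1, ?_⟩
    intro x hx y hy a b ha hb hab
    have h := Real.convexOn_mul_log.2 (x := 1-x) (y := 1-y)
      (Set.mem_Ici.mpr (by linarith [Set.mem_Iic.mp hx]))
      (Set.mem_Ici.mpr (by linarith [Set.mem_Iic.mp hy])) ha hb hab
    simp only [smul_eq_mul] at h ⊢
    have he : 1 - (a*x + b*y) = a*(1-x) + b*(1-y) := by linarith
    rw [he]
    exact h
  exact h1.add (A.subset (fun x hx => hx.2) (convex_Icc 0 1))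

lemma convexOn_fBE : ConvexOn ℝ (Set.Ici 0)
    (fun x : ℝ => x * Real.log x - (1 + x) * Real.log (1 + x)) := by
  have hint : interior (Set.Ici (0:ℝ)) = Set.Ioi 0 := interior_Ici
  have hderiv : ∀ x : ℝ, 0 < x → HasDerivAt
      (fun x : ℝ => x * Real.log x - (1 + x) * Real.log (1 + x))
      (Real.log x - Real.log (1 + x)) x := by
    intro x hx
    have h1 : HasDerivAt (fun y : ℝ => y * Real.log y) (Real.log x + 1) x :=
      Real.hasDerivAt_mul_log hx.ne'
    have h2 : HasDerivAt (fun y : ℝ => (1 + y) * Real.log (1 + y))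
        ((Real.log (1 + x) + 1) * 1) x := by
      have hinner : HasDerivAt (fun y : ℝ => 1 + y) 1 x := by
        simpa using (hasDerivAt_id x).const_add 1
      exact (Real.hasDerivAt_mul_log (by positivity : (1:ℝ) + x ≠ 0)).comp x hinner
    have := h1.sub h2
    rw [show Real.log x - Real.log (1 + x) = Real.log x + 1 - (Real.log (1 + x) + 1) * 1 by ring]
    exact this
  apply MonotoneOn.convexOn_of_deriv (convex_Ici 0)
  · apply ContinuousOn.sub Real.continuous_mul_log.continuousOn
    exact (Real.continuous_mul_log.comp (continuous_const.add continuous_id)).continuousOn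
  · rw [hint]
    intro x hx
    exact ((hderiv x hx).differentiableAt).differentiableWithinAt
  · rw [hint]
    have hde : ∀ x ∈ Set.Ioi (0:ℝ),
        deriv (fun x : ℝ => x * Real.log x - (1 + x) * Real.log (1 + x)) x
          = Real.log x - Real.log (1 + x) := fun x hx => (hderiv x hx).deriv
    intro x hx y hy hxy
    have hx' : (0:ℝ) < x := hx
    have hy' : (0:ℝ) < y := hy
    rw [hde x hx, hde y hy, sub_le_sub_iff,
      ← Real.log_mul (by positivity) (by positivity),
      ← Real.log_mul (by positivity) (by positivity)]
    apply Real.log_le_log (by positivity)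
    nlinarith

/-- The basic inequality `t - 1 ≤ t log t` for `t ≥ 0`. -/
lemma sub_one_le_mul_log {t : ℝ} (ht : 0 ≤ t) : t - 1 ≤ t * Real.log t := by
  rcases eq_or_lt_of_le ht with h | ht'
  · simp [← h]
  · have h2 := Real.log_le_sub_one_of_pos (inv_pos.mpr ht')
    rw [Real.log_inv] at h2
    have h3 := mul_le_mul_of_nonneg_right (by linarith : -Real.log t ≤ t⁻¹ - 1) ht'.le
    have h4 : (t⁻¹ - 1) * t = 1 - t := by field_simp
    nlinarith

lemma fBE_le_fMB {x : ℝ} (hx : 0 ≤ x) :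
    x * Real.log x - (1 + x) * Real.log (1 + x) ≤ x * (Real.log x - 1) := by
  have := sub_one_le_mul_log (by linarith : (0:ℝ) ≤ 1 + x)
  nlinarith

lemma fMB_le_fFD {x : ℝ} (hx : 0 ≤ x) (hx1 : x ≤ 1) :
    x * (Real.log x - 1) ≤ x * Real.log x + (1 - x) * Real.log (1 - x) := by
  have := sub_one_le_mul_log (by linarith : (0:ℝ) ≤ 1 - x)
  nlinarith

/-! ### Basic lemmas about `serSum` -/

lemma serSum_eq_of_tendsto {β : ℕ → EReal} {l : EReal}
    (h : Tendsto (fun N => ∑ k ∈ Finset.range N, β k) atTop (nhds l)) : serSum β = l := by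
  have h' : ∃ l : EReal, Tendsto (fun N => ∑ k ∈ Finset.range N, β k) atTop (nhds l) := ⟨l, h⟩
  rw [serSum, dif_pos h']
  exact tendsto_nhds_unique h'.choose_spec h

lemma serSum_eq_top_of_not_ex {β : ℕ → EReal}
    (h : ¬ ∃ l : EReal, Tendsto (fun N => ∑ k ∈ Finset.range N, β k) atTop (nhds l)) :
    serSum β = ⊤ := dif_neg h

lemma serSum_spec {β : ℕ → EReal} (h : serSum β ≠ ⊤) :
    Tendsto (fun N => ∑ k ∈ Finset.range N, β k) atTop (nhds (serSum β)) := by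
  by_cases h' : ∃ l : EReal, Tendsto (fun N => ∑ k ∈ Finset.range N, β k) atTop (nhds l)
  · rw [serSum, dif_pos h']; exact h'.choose_spec
  · exact absurd (serSum_eq_top_of_not_ex h') h

lemma coe_psum (a : ℕ → ℝ) (N : ℕ) :
    ((∑ k ∈ Finset.range N, a k : ℝ) : EReal) = ∑ k ∈ Finset.range N, ((a k : ℝ) : EReal) := by
  induction N with
  | zero => simp
  | succ n ih => rw [Finset.sum_range_succ, Finset.sum_range_succ, ← ih]; push_cast; rfl

lemma coe_tendsto_bot {f : ℕ → ℝ} (h : Tendsto f atTop atBot) :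
    Tendsto (fun n => ((f n : ℝ) : EReal)) atTop (nhds ⊥) := by
  rw [EReal.tendsto_nhds_bot_iff_real]
  intro x
  filter_upwards [h.eventually_le_atBot (x - 1)] with n hn
  exact_mod_cast lt_of_le_of_lt hn (by linarith)

lemma coe_tendsto_bot_iff {f : ℕ → ℝ} :
    Tendsto (fun n => ((f n : ℝ) : EReal)) atTop (nhds ⊥) ↔ Tendsto f atTop atBot := by
  constructor
  · intro h
    rw [EReal.tendsto_nhds_bot_iff_real] at h
    rw [tendsto_atBot]
    intro b
    filter_upwards [h b] with n hn
    exact le_of_lt (by exact_mod_cast hn)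
  · exact coe_tendsto_bot

lemma serSum_coe_eq_bot {c : ℕ → ℝ}
    (h : Tendsto (fun N => ∑ k ∈ Finset.range N, c k) atTop atBot) :
    serSum (fun n => ((c n : ℝ) : EReal)) = ⊥ :=
  serSum_eq_of_tendsto (by simpa only [coe_psum] using coe_tendsto_bot h)

lemma serSum_coe_eq {c : ℕ → ℝ} {x : ℝ}
    (h : Tendsto (fun N => ∑ k ∈ Finset.range N, c k) atTop (nhds x)) :
    serSum (fun n => ((c n : ℝ) : EReal)) = (x : EReal) :=
  serSum_eq_of_tendsto (by simpa only [coe_psum] using EReal.tendsto_coe.mpr h)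

lemma tendsto_atBot_aux {A B C : ℕ → ℝ} {M : ℝ} (hA : Tendsto A atTop atBot)
    (hB : ∀ᶠ N in atTop, B N ≤ M) (hC : ∀ N, C N ≤ A N + B N) :
    Tendsto C atTop atBot := by
  have h1 : Tendsto (fun N => A N + M) atTop atBot := tendsto_atBot_add_const_right _ M hA
  apply tendsto_atBot_mono' atTop _ h1
  filter_upwards [hB] with N hN
  exact le_trans (hC N) (by linarith)

/-- The key comparison lemma: if `c ≤ a + b` termwise and the partial sums of `a`, `b`
converge (in `EReal`, to non-`⊤` limits), then `serSum c ≤ la + lb`. -/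
lemma serSum_coe_le_core {a b c : ℕ → ℝ} (h : ∀ n, c n ≤ a n + b n) {la lb : EReal}
    (hla : la ≠ ⊤) (hlb : lb ≠ ⊤)
    (ha : Tendsto (fun N => ((∑ k ∈ Finset.range N, a k : ℝ) : EReal)) atTop (nhds la))
    (hb : Tendsto (fun N => ((∑ k ∈ Finset.range N, b k : ℝ) : EReal)) atTop (nhds lb)) :
    serSum (fun n => ((c n : ℝ) : EReal)) ≤ la + lb := by
  set A : ℕ → ℝ := fun N => ∑ k ∈ Finset.range N, a k with hAdef
  set B : ℕ → ℝ := fun N => ∑ k ∈ Finset.range N, b k with hBdef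
  set C : ℕ → ℝ := fun N => ∑ k ∈ Finset.range N, c k with hCdef
  have hCle : ∀ N, C N ≤ A N + B N := by
    intro N
    rw [hAdef, hBdef, hCdef, ← Finset.sum_add_distrib]
    exact Finset.sum_le_sum fun k _ => h k
  induction la with
  | bot =>
    have hA : Tendsto A atTop atBot := coe_tendsto_bot_iff.mp ha
    have hBbd : ∃ M : ℝ, ∀ᶠ N in atTop, B N ≤ M := by
      induction lb with
      | bot =>
        exact ⟨0, (coe_tendsto_bot_iff.mp hb).eventually_le_atBot 0⟩
      | coe β =>
        have := EReal.tendsto_coe.mp hb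
        exact ⟨β + 1, (this.eventually (eventually_le_nhds (by linarith)))⟩
      | top => exact absurd rfl hlb
    obtain ⟨M, hM⟩ := hBbd
    rw [serSum_coe_eq_bot (tendsto_atBot_aux hA hM hCle)]
    exact bot_le
  | coe α =>
    have hA : Tendsto A atTop (nhds α) := EReal.tendsto_coe.mp ha
    induction lb with
    | bot =>
      have hB : Tendsto B atTop atBot := coe_tendsto_bot_iff.mp hb
      have hAbd : ∀ᶠ N in atTop, A N ≤ α + 1 :=
        hA.eventually (eventually_le_nhds (by linarith))
      have : Tendsto C atTop atBot :=
        tendsto_atBot_aux hB hAbd (fun N => by linarith [hCle N])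
      rw [serSum_coe_eq_bot this]
      exact bot_le
    | coe β =>
      have hB : Tendsto B atTop (nhds β) := EReal.tendsto_coe.mp hb
      set D : ℕ → ℝ := fun N => A N + B N - C N with hDdef
      have hDmono : Monotone D := by
        apply monotone_nat_of_le_succ
        intro N
        have : C (N+1) = C N + c N := by rw [hCdef]; simp [Finset.sum_range_succ]
        have hA' : A (N+1) = A N + a N := by rw [hAdef]; simp [Finset.sum_range_succ]
        have hB' : B (N+1) = B N + b N := by rw [hBdef]; simp [Finset.sum_range_succ]
        simp only [hDdef]
        rw [this, hA', hB']
        linarith [h N]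
      have hD0 : ∀ N, 0 ≤ D N := by
        intro N
        have := hDmono (Nat.zero_le N)
        simpa [hDdef, hAdef, hBdef, hCdef] using this
      rcases tendsto_of_monotone hDmono with hDtop | ⟨d, hDlim⟩
      · have hC : Tendsto C atTop atBot := by
          have h1 : Tendsto (fun N => A N + B N) atTop (nhds (α + β)) := hA.add hB
          have h2 : Tendsto (fun N => -(D N)) atTop atBot :=
            tendsto_neg_atTop_atBot.comp hDtop
          have h3 := h1.add_atBot h2
          have he : (fun N => A N + B N + -(D N)) = C := by
            funext N; simp only [hDdef]; ring
          rwa [he] at h3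
        rw [serSum_coe_eq_bot hC]
        exact bot_le
      · have hC : Tendsto C atTop (nhds (α + β - d)) := by
          have : C = fun N => A N + B N - D N := by funext N; simp only [hDdef]; ring
          rw [this]
          exact (hA.add hB).sub hDlim
        rw [serSum_coe_eq hC]
        have hd0 : 0 ≤ d := ge_of_tendsto hDlim (Eventually.of_forall hD0)
        have : ((α + β - d : ℝ) : EReal) ≤ ((α + β : ℝ) : EReal) := by
          exact_mod_cast (by linarith : α + β - d ≤ α + β)
        simpa [EReal.coe_add] using this
    | top => exact absurd rfl hlb
  | top => exact absurd rfl hla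

lemma serSum_coe_mono {a b : ℕ → ℝ} (hab : ∀ n, a n ≤ b n) :
    serSum (fun n => ((a n : ℝ) : EReal)) ≤ serSum (fun n => ((b n : ℝ) : EReal)) := by
  by_cases hex : ∃ l : EReal,
      Tendsto (fun N => ∑ k ∈ Finset.range N, ((b k : ℝ) : EReal)) atTop (nhds l)
  · obtain ⟨l, hl⟩ := hex
    rw [serSum_eq_of_tendsto hl]
    rcases eq_or_ne l ⊤ with rfl | hlt
    · exact le_top
    · have hb' : Tendsto (fun N => ((∑ k ∈ Finset.range N, b k : ℝ) : EReal)) atTop (nhds l) := by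
        simpa only [coe_psum] using hl
      have h0 : Tendsto (fun N => ((∑ k ∈ Finset.range N, (0:ℝ) : ℝ) : EReal)) atTop
          (nhds (((0:ℝ) : EReal))) := by
        simp only [Finset.sum_const_zero]
        exact tendsto_const_nhds
      have := serSum_coe_le_core (a := b) (b := fun _ => (0:ℝ)) (c := a)
        (fun n => by simpa using hab n) hlt (by simp) hb' h0
      simpa using this
  · rw [serSum_eq_top_of_not_ex hex]
    exact le_top

lemma finset_sum_ne_bot {s : Finset ℕ} {f : ℕ → EReal} (h : ∀ i ∈ s, f i ≠ ⊥) :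
    ∑ i ∈ s, f i ≠ ⊥ := by
  classical
  induction s using Finset.induction_on with
  | empty => simp
  | @insert x s' hx ih =>
    rw [Finset.sum_insert hx]
    rw [ne_eq, EReal.add_eq_bot_iff]
    push_neg
    exact ⟨h x (Finset.mem_insert_self x s'), ih fun i hi => h i (Finset.mem_insert_of_mem hi)⟩

lemma finset_sum_eq_top {s : Finset ℕ} {f : ℕ → EReal} (h : ∀ i ∈ s, f i ≠ ⊥) {k : ℕ}
    (hk : k ∈ s) (htop : f k = ⊤) : ∑ i ∈ s, f i = ⊤ := by
  classical
  rw [← Finset.add_sum_erase s f hk, htop]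
  exact EReal.top_add_of_ne_bot
    (finset_sum_ne_bot fun i hi => h i (Finset.mem_of_mem_erase hi))

lemma serSum_eq_top_of_term_top {β : ℕ → EReal} (hb : ∀ n, β n ≠ ⊥) {k : ℕ}
    (hk : β k = ⊤) : serSum β = ⊤ := by
  apply serSum_eq_of_tendsto
  have heq : (fun _ : ℕ => (⊤:EReal)) =ᶠ[atTop] (fun N => ∑ k ∈ Finset.range N, β k) := by
    filter_upwards [eventually_ge_atTop (k+1)] with N hN
    exact (finset_sum_eq_top (fun i _ => hb i) (Finset.mem_range.mpr hN) hk).symm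
  exact Tendsto.congr' heq tendsto_const_nhds

lemma serSum_coe_lt_top_of_eventually_nonpos {a : ℕ → ℝ}
    (h : ∀ᶠ n in atTop, a n ≤ 0) : serSum (fun n => ((a n : ℝ) : EReal)) < ⊤ := by
  obtain ⟨N0, hN0⟩ := eventually_atTop.mp h
  set A : ℕ → ℝ := fun N => ∑ k ∈ Finset.range N, a k with hAdef
  have hQ : Antitone (fun n => A (n + N0)) := by
    apply antitone_nat_of_succ_le
    intro n
    have : A (n + N0 + 1) = A (n + N0) + a (n + N0) := by
      rw [hAdef]; simp [Finset.sum_range_succ]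
    rw [show n + 1 + N0 = n + N0 + 1 by ring, this]
    linarith [hN0 (n + N0) (Nat.le_add_left N0 n)]
  rcases tendsto_of_antitone hQ with hbot | ⟨α, hα⟩
  · have : Tendsto A atTop atBot := (tendsto_add_atTop_iff_nat N0).mp hbot
    rw [serSum_coe_eq_bot this]
    exact bot_lt_top
  · have : Tendsto A atTop (nhds α) := (tendsto_add_atTop_iff_nat N0).mp hα
    rw [serSum_coe_eq this]
    exact EReal.coe_lt_top α

/-! ### Basic lemmas about `Hval` -/

lemma Hval_le {p σ : ℕ → ℝ} {W : ℝ → EReal} {u v : ℝ} {w : ℕ → ℝ} (hw : w ∈ Sfeas σ u v) :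
    Hval p σ W u v ≤ serSum (fun n => (p n : EReal) * W (w n / p n)) :=
  sInf_le (Set.mem_image_of_mem _ hw)

lemma exists_of_Hval_lt {p σ : ℕ → ℝ} {W : ℝ → EReal} {u v : ℝ} {μ : EReal}
    (h : Hval p σ W u v < μ) :
    ∃ w ∈ Sfeas σ u v, serSum (fun n => (p n : EReal) * W (w n / p n)) < μ := by
  obtain ⟨x, hx, hxlt⟩ := sInf_lt_iff.mp h
  obtain ⟨w, hw, rfl⟩ := hx
  exact ⟨w, hw, hxlt⟩

lemma Hval_eq_top_of_empty {p σ : ℕ → ℝ} {W : ℝ → EReal} {u v : ℝ}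
    (h : ¬ (Sfeas σ u v).Nonempty) : Hval p σ W u v = ⊤ := by
  rw [Hval, Set.not_nonempty_iff_eq_empty.mp h]
  simp

/-- Structure of the terms of the series: either all arguments lie in the domain `D` and all
terms are (coercions of) reals, or the sum is `+∞`. -/
lemma term_structure {p : ℕ → ℝ} (hp : ∀ n, 1 ≤ p n) {W : ℝ → EReal} {f : ℝ → ℝ} {D : Set ℝ}
    (hWD : ∀ x ∈ D, W x = ((f x : ℝ) : EReal))
    (hWtop : ∀ x, x ∉ D → W x = ⊤)
    (w : ℕ → ℝ)
    (htop : serSum (fun n => (p n : EReal) * W (w n / p n)) ≠ ⊤) :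
    (∀ n, w n / p n ∈ D) ∧
      (fun n => (p n : EReal) * W (w n / p n)) =
        fun n => ((p n * f (w n / p n) : ℝ) : EReal) := by
  have hppos : ∀ n, (0:ℝ) < p n := fun n => lt_of_lt_of_le one_pos (hp n)
  have hcases : ∀ n, (w n / p n ∈ D ∧
      (p n : EReal) * W (w n / p n) = ((p n * f (w n / p n) : ℝ) : EReal))
      ∨ (p n : EReal) * W (w n / p n) = ⊤ := by
    intro n
    by_cases hD : w n / p n ∈ D
    · exact Or.inl ⟨hD, by rw [hWD _ hD, ← EReal.coe_mul]⟩
    · exact Or.inr (by rw [hWtop _ hD, EReal.coe_mul_top_of_pos (hppos n)])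
  have hnbot : ∀ n, (p n : EReal) * W (w n / p n) ≠ ⊥ := by
    intro n
    rcases hcases n with ⟨_, he⟩ | he
    · rw [he]; exact EReal.coe_ne_bot _
    · rw [he]; simp
  have hall : ∀ n, w n / p n ∈ D ∧
      (p n : EReal) * W (w n / p n) = ((p n * f (w n / p n) : ℝ) : EReal) := by
    intro n
    rcases hcases n with h | he
    · exact h
    · exact absurd (serSum_eq_top_of_term_top hnbot he) htop
  exact ⟨fun n => (hall n).1, funext fun n => (hall n).2⟩

lemma scale_limit {A : ℕ → ℝ} {la : EReal} {l μ : ℝ} (hl : 0 < l) (hla : la ≠ ⊤)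
    (h : Tendsto (fun N => ((A N : ℝ) : EReal)) atTop (nhds la)) (hlt : la ≤ (μ : EReal)) :
    ∃ la' : EReal, la' ≠ ⊤ ∧ la' ≤ ((l * μ : ℝ) : EReal) ∧
      Tendsto (fun N => ((l * A N : ℝ) : EReal)) atTop (nhds la') := by
  induction la with
  | bot =>
    refine ⟨⊥, by simp, bot_le, ?_⟩
    exact coe_tendsto_bot (Tendsto.const_mul_atBot hl (coe_tendsto_bot_iff.mp h))
  | coe α =>
    refine ⟨((l * α : ℝ) : EReal), EReal.coe_ne_top _, ?_, ?_⟩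
    · exact_mod_cast mul_le_mul_of_nonneg_left (by exact_mod_cast hlt) hl.le
    · exact EReal.tendsto_coe.mpr ((EReal.tendsto_coe.mp h).const_mul l)
  | top => exact absurd rfl hla

/-- The master convexity lemma, for a general `W` given by a convex real function `f` on a
convex domain `D` and `+∞` outside. -/
lemma Hval_convex_gen (p σ : ℕ → ℝ) (hp : ∀ n, 1 ≤ p n)
    (W : ℝ → EReal) (f : ℝ → ℝ) (D : Set ℝ)
    (hWD : ∀ x ∈ D, W x = ((f x : ℝ) : EReal))
    (hWtop : ∀ x, x ∉ D → W x = ⊤)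
    (hconv : ConvexOn ℝ D f) :
    ∀ u v u' v' : ℝ, ∀ l : ℝ, 0 < l → l < 1 → ∀ μ μ' : ℝ,
      Hval p σ W u v < (μ : EReal) → Hval p σ W u' v' < (μ' : EReal) →
      Hval p σ W (l * u + (1 - l) * u') (l * v + (1 - l) * v') ≤
        ((l * μ + (1 - l) * μ' : ℝ) : EReal) := by
  intro u v u' v' l hl0 hl1 μ μ' hH hH'
  have hppos : ∀ n, (0:ℝ) < p n := fun n => lt_of_lt_of_le one_pos (hp n)
  obtain ⟨w, hw, hser⟩ := exists_of_Hval_lt hH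
  obtain ⟨w', hw', hser'⟩ := exists_of_Hval_lt hH'
  have hne : serSum (fun n => (p n : EReal) * W (w n / p n)) ≠ ⊤ :=
    ne_top_of_lt (lt_of_lt_of_le hser le_top)
  have hne' : serSum (fun n => (p n : EReal) * W (w' n / p n)) ≠ ⊤ :=
    ne_top_of_lt (lt_of_lt_of_le hser' le_top)
  obtain ⟨hxD, hTeq⟩ := term_structure hp hWD hWtop w hne
  obtain ⟨hxD', hTeq'⟩ := term_structure hp hWD hWtop w' hne'
  set a : ℕ → ℝ := fun n => p n * f (w n / p n) with hadef
  set b : ℕ → ℝ := fun n => p n * f (w' n / p n) with hbdef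
  rw [hTeq] at hser hne
  rw [hTeq'] at hser' hne'
  have hta : Tendsto (fun N => ((∑ k ∈ Finset.range N, a k : ℝ) : EReal)) atTop
      (nhds (serSum fun n => ((a n : ℝ) : EReal))) := by
    simpa only [coe_psum] using serSum_spec hne
  have htb : Tendsto (fun N => ((∑ k ∈ Finset.range N, b k : ℝ) : EReal)) atTop
      (nhds (serSum fun n => ((b n : ℝ) : EReal))) := by
    simpa only [coe_psum] using serSum_spec hne'
  obtain ⟨la', hla'top, hla'le, hla'lim⟩ := scale_limit hl0 hne hta hser.le
  obtain ⟨lb', hlb'top, hlb'le, hlb'lim⟩ :=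
    scale_limit (by linarith : (0:ℝ) < 1 - l) hne' htb hser'.le
  -- the combined sequence
  set w'' : ℕ → ℝ := fun n => l * w n + (1 - l) * w' n with hw''def
  have hw''S : w'' ∈ Sfeas σ (l * u + (1 - l) * u') (l * v + (1 - l) * v') := by
    refine ⟨fun n => add_nonneg (mul_nonneg hl0.le (hw.1 n))
      (mul_nonneg (by linarith) (hw'.1 n)), ?_, ?_⟩
    · have h1 := (hw.2.1.const_mul l).add (hw'.2.1.const_mul (1-l))
      exact h1.congr fun N => by
        rw [Finset.mul_sum, Finset.mul_sum, ← Finset.sum_add_distrib]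
    · have h2 := (hw.2.2.const_mul l).add (hw'.2.2.const_mul (1-l))
      exact h2.congr fun N => by
        rw [Finset.mul_sum, Finset.mul_sum, ← Finset.sum_add_distrib]
        exact Finset.sum_congr rfl fun k _ => by ring
  have hxeq : ∀ n, w'' n / p n = l * (w n / p n) + (1 - l) * (w' n / p n) := by
    intro n
    rw [hw''def]
    field_simp
  have hx''D : ∀ n, w'' n / p n ∈ D := by
    intro n
    rw [hxeq n]
    have := hconv.1 (hxD n) (hxD' n) hl0.le (by linarith : (0:ℝ) ≤ 1 - l) (by ring)
    simpa [smul_eq_mul] using this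
  set c : ℕ → ℝ := fun n => p n * f (w'' n / p n) with hcdef
  have hcle : ∀ n, c n ≤ (fun n => l * a n) n + (fun n => (1-l) * b n) n := by
    intro n
    have hcv := hconv.2 (hxD n) (hxD' n) hl0.le (by linarith : (0:ℝ) ≤ 1 - l) (by ring)
    simp only [smul_eq_mul] at hcv
    have h1 : c n = p n * f (l * (w n / p n) + (1 - l) * (w' n / p n)) := by
      show p n * f (w'' n / p n) = _
      rw [hxeq n]
    have h2 : p n * f (l * (w n / p n) + (1 - l) * (w' n / p n)) ≤
        p n * (l * f (w n / p n) + (1 - l) * f (w' n / p n)) :=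
      mul_le_mul_of_nonneg_left hcv (hppos n).le
    have h3 : p n * (l * f (w n / p n) + (1 - l) * f (w' n / p n)) = l * a n + (1-l) * b n := by
      rw [hadef, hbdef]; ring
    simp only [h1]
    rw [h3] at h2
    exact h2
  have hA'lim : Tendsto (fun N => ((∑ k ∈ Finset.range N, l * a k : ℝ) : EReal)) atTop
      (nhds la') := by
    have : ∀ N : ℕ, ∑ k ∈ Finset.range N, l * a k = l * ∑ k ∈ Finset.range N, a k := by
      intro N; rw [Finset.mul_sum]
    simpa only [this] using hla'lim
  have hB'lim : Tendsto (fun N => ((∑ k ∈ Finset.range N, (1-l) * b k : ℝ) : EReal)) atTop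
      (nhds lb') := by
    have : ∀ N : ℕ, ∑ k ∈ Finset.range N, (1-l) * b k = (1-l) * ∑ k ∈ Finset.range N, b k := by
      intro N; rw [Finset.mul_sum]
    simpa only [this] using hlb'lim
  have hcore := serSum_coe_le_core hcle hla'top hlb'top hA'lim hB'lim
  have hT'' : (fun n => (p n : EReal) * W (w'' n / p n)) = fun n => ((c n : ℝ) : EReal) :=
    funext fun n => by rw [hWD _ (hx''D n), ← EReal.coe_mul]
  calc Hval p σ W (l * u + (1 - l) * u') (l * v + (1 - l) * v')
      ≤ serSum (fun n => (p n : EReal) * W (w'' n / p n)) := Hval_le hw''S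
    _ = serSum (fun n => ((c n : ℝ) : EReal)) := by rw [hT'']
    _ ≤ la' + lb' := hcore
    _ ≤ ((l * μ : ℝ) : EReal) + (((1-l) * μ' : ℝ) : EReal) := add_le_add hla'le hlb'le
    _ = ((l * μ + (1 - l) * μ' : ℝ) : EReal) := by rw [← EReal.coe_add]

/-! ### Entropy-specific facts -/

lemma EBEe_eq {x : ℝ} (hx : x ∈ Set.Ici (0:ℝ)) :
    EBEe x = ((x * Real.log x - (1 + x) * Real.log (1 + x) : ℝ) : EReal) := if_pos hx

lemma EBEe_top {x : ℝ} (hx : x ∉ Set.Ici (0:ℝ)) : EBEe x = ⊤ := if_neg (by simpa using hx)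

lemma EMBe_eq {x : ℝ} (hx : x ∈ Set.Ici (0:ℝ)) :
    EMBe x = ((x * (Real.log x - 1) : ℝ) : EReal) := if_pos hx

lemma EMBe_top {x : ℝ} (hx : x ∉ Set.Ici (0:ℝ)) : EMBe x = ⊤ := if_neg (by simpa using hx)

lemma EFDe_eq {x : ℝ} (hx : x ∈ Set.Icc (0:ℝ) 1) :
    EFDe x = ((x * Real.log x + (1 - x) * Real.log (1 - x) : ℝ) : EReal) :=
  if_pos (Set.mem_Icc.mp hx)

lemma EFDe_top {x : ℝ} (hx : x ∉ Set.Icc (0:ℝ) 1) : EFDe x = ⊤ :=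
  if_neg (by simpa [Set.mem_Icc] using hx)

lemma Hval_BE_le_MB (p σ : ℕ → ℝ) (hp : ∀ n, 1 ≤ p n) (u v : ℝ) :
    Hval p σ EBEe u v ≤ Hval p σ EMBe u v := by
  have hppos : ∀ n, (0:ℝ) < p n := fun n => lt_of_lt_of_le one_pos (hp n)
  apply le_sInf
  rintro y ⟨w, hw, rfl⟩
  have hx : ∀ n, (0:ℝ) ≤ w n / p n := fun n => div_nonneg (hw.1 n) (hppos n).le
  have hBE : (fun n => (p n : EReal) * EBEe (w n / p n)) = fun n =>
      ((p n * ((w n / p n) * Real.log (w n / p n)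
        - (1 + w n / p n) * Real.log (1 + w n / p n)) : ℝ) : EReal) :=
    funext fun n => by rw [EBEe_eq (Set.mem_Ici.mpr (hx n)), ← EReal.coe_mul]
  have hMB : (fun n => (p n : EReal) * EMBe (w n / p n)) = fun n =>
      ((p n * ((w n / p n) * (Real.log (w n / p n) - 1)) : ℝ) : EReal) :=
    funext fun n => by rw [EMBe_eq (Set.mem_Ici.mpr (hx n)), ← EReal.coe_mul]
  calc Hval p σ EBEe u v ≤ serSum (fun n => (p n : EReal) * EBEe (w n / p n)) := Hval_le hw
    _ ≤ serSum (fun n => (p n : EReal) * EMBe (w n / p n)) := by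
        rw [hBE, hMB]
        exact serSum_coe_mono fun n =>
          mul_le_mul_of_nonneg_left (fBE_le_fMB (hx n)) (hppos n).le

lemma Hval_MB_le_FD (p σ : ℕ → ℝ) (hp : ∀ n, 1 ≤ p n) (u v : ℝ) :
    Hval p σ EMBe u v ≤ Hval p σ EFDe u v := by
  have hppos : ∀ n, (0:ℝ) < p n := fun n => lt_of_lt_of_le one_pos (hp n)
  apply le_sInf
  rintro y ⟨w, hw, rfl⟩
  show Hval p σ EMBe u v ≤ serSum (fun n => (p n : EReal) * EFDe (w n / p n))
  rcases eq_or_ne (serSum (fun n => (p n : EReal) * EFDe (w n / p n))) ⊤ with htop | hne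
  · rw [htop]; exact le_top
  · have hx : ∀ n, (0:ℝ) ≤ w n / p n := fun n => div_nonneg (hw.1 n) (hppos n).le
    obtain ⟨hxD, hTeq⟩ := term_structure hp (fun x hx => EFDe_eq hx) (fun x hx => EFDe_top hx)
      w hne
    have hMB : (fun n => (p n : EReal) * EMBe (w n / p n)) = fun n =>
        ((p n * ((w n / p n) * (Real.log (w n / p n) - 1)) : ℝ) : EReal) :=
      funext fun n => by rw [EMBe_eq (Set.mem_Ici.mpr (hx n)), ← EReal.coe_mul]
    calc Hval p σ EMBe u v ≤ serSum (fun n => (p n : EReal) * EMBe (w n / p n)) := Hval_le hw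
      _ ≤ serSum (fun n => (p n : EReal) * EFDe (w n / p n)) := by
          rw [hMB, hTeq]
          exact serSum_coe_mono fun n => mul_le_mul_of_nonneg_left
            (fMB_le_fFD (hx n) ((Set.mem_Icc.mp (hxD n)).2)) (hppos n).le

lemma Hval_MB_lt_top (p σ : ℕ → ℝ) (hp : ∀ n, 1 ≤ p n) {u v : ℝ}
    (hne : (Sfeas σ u v).Nonempty) : Hval p σ EMBe u v < ⊤ := by
  obtain ⟨w, hw⟩ := hne
  have hppos : ∀ n, (0:ℝ) < p n := fun n => lt_of_lt_of_le one_pos (hp n)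
  have hx : ∀ n, (0:ℝ) ≤ w n / p n := fun n => div_nonneg (hw.1 n) (hppos n).le
  have hMB : (fun n => (p n : EReal) * EMBe (w n / p n)) = fun n =>
      ((p n * ((w n / p n) * (Real.log (w n / p n) - 1)) : ℝ) : EReal) :=
    funext fun n => by rw [EMBe_eq (Set.mem_Ici.mpr (hx n)), ← EReal.coe_mul]
  have hw0 : Tendsto (fun n => w n) atTop (nhds 0) := by
    have h1 := hw.2.1
    have h2 := h1.comp (tendsto_add_atTop_nat 1)
    have h3 := h2.sub h1
    rw [sub_self] at h3
    have he : (fun N => ((fun N => ∑ k ∈ Finset.range N, w k) ∘ (fun n => n + 1)) N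
        - ∑ k ∈ Finset.range N, w k) = fun N => w N := by
      funext N
      simp [Function.comp, Finset.sum_range_succ]
    rwa [he] at h3
  have hev : ∀ᶠ n in atTop, p n * ((w n / p n) * (Real.log (w n / p n) - 1)) ≤ 0 := by
    filter_upwards [hw0.eventually (eventually_le_nhds zero_lt_one)] with n hn
    have hx1 : w n / p n ≤ 1 := div_le_one_of_le₀ (le_trans hn (hp n)) (hppos n).le
    have hlog : Real.log (w n / p n) ≤ 0 := Real.log_nonpos (hx n) hx1
    have h1 : (w n / p n) * (Real.log (w n / p n) - 1) ≤ 0 :=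
      mul_nonpos_of_nonneg_of_nonpos (hx n) (by linarith)
    exact mul_nonpos_of_nonneg_of_nonpos (hppos n).le h1
  calc Hval p σ EMBe u v ≤ serSum (fun n => (p n : EReal) * EMBe (w n / p n)) := Hval_le hw
    _ < ⊤ := by rw [hMB]; exact serSum_coe_lt_top_of_eventually_nonpos hev

lemma Sfeas_nonempty_of_Hval_lt_top {p σ : ℕ → ℝ} {W : ℝ → EReal} {u v : ℝ}
    (h : Hval p σ W u v < ⊤) : (Sfeas σ u v).Nonempty := by
  by_contra hc
  rw [Hval_eq_top_of_empty hc] at h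
  exact lt_irrefl _ h

/-- Convexity of the value function `H_W`, the comparison `H_BE ≤ H_MB ≤ H_FD`, and the
domain relations `dom H_FD ⊆ dom H_MB = dom H_BE = dom S`. -/
theorem stmt5 (p σ : ℕ → ℝ) (hp : ∀ n, 1 ≤ p n) :
    (∀ W ∈ ({EBEe, EMBe, EFDe} : Set (ℝ → EReal)),
      ∀ u v u' v' : ℝ, ∀ l : ℝ, 0 < l → l < 1 → ∀ μ μ' : ℝ,
        Hval p σ W u v < (μ : EReal) → Hval p σ W u' v' < (μ' : EReal) →
        Hval p σ W (l * u + (1 - l) * u') (l * v + (1 - l) * v') ≤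
          ((l * μ + (1 - l) * μ' : ℝ) : EReal)) ∧
    (∀ u v : ℝ, Hval p σ EBEe u v ≤ Hval p σ EMBe u v ∧
      Hval p σ EMBe u v ≤ Hval p σ EFDe u v) ∧
    {z : ℝ × ℝ | Hval p σ EFDe z.1 z.2 < ⊤} ⊆ {z : ℝ × ℝ | Hval p σ EMBe z.1 z.2 < ⊤} ∧
    {z : ℝ × ℝ | Hval p σ EMBe z.1 z.2 < ⊤} = {z : ℝ × ℝ | Hval p σ EBEe z.1 z.2 < ⊤} ∧
    {z : ℝ × ℝ | Hval p σ EBEe z.1 z.2 < ⊤} = {z : ℝ × ℝ | (Sfeas σ z.1 z.2).Nonempty} := by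
  refine ⟨?_, fun u v => ⟨Hval_BE_le_MB p σ hp u v, Hval_MB_le_FD p σ hp u v⟩, ?_, ?_, ?_⟩
  · intro W hW
    simp only [Set.mem_insert_iff, Set.mem_singleton_iff] at hW
    rcases hW with rfl | rfl | rfl
    · exact Hval_convex_gen p σ hp EBEe _ (Set.Ici 0)
        (fun x hx => EBEe_eq hx) (fun x hx => EBEe_top hx) convexOn_fBE
    · exact Hval_convex_gen p σ hp EMBe _ (Set.Ici 0)
        (fun x hx => EMBe_eq hx) (fun x hx => EMBe_top hx) convexOn_fMB
    · exact Hval_convex_gen p σ hp EFDe _ (Set.Icc 0 1)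
        (fun x hx => EFDe_eq hx) (fun x hx => EFDe_top hx) convexOn_fFD
  · intro z hz
    exact lt_of_le_of_lt (Hval_MB_le_FD p σ hp z.1 z.2) hz
  · ext z
    simp only [Set.mem_setOf_eq]
    constructor
    · intro hz
      exact lt_of_le_of_lt (Hval_BE_le_MB p σ hp z.1 z.2) hz
    · intro hz
      exact Hval_MB_lt_top p σ hp (Sfeas_nonempty_of_Hval_lt_top hz)
  · ext z
    simp only [Set.mem_setOf_eq]
    constructor
    · exact fun hz => Sfeas_nonempty_of_Hval_lt_top hz
    · intro hz
      exact lt_of_le_of_lt (Hval_BE_le_MB p σ hp z.1 z.2) (Hval_MB_lt_top p σ hp hz)
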